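/- Let e_1, ..., e_n be independent random variables where e_i has c.d.f. f_i(x) = min{exp(ω_i(x - z_i)), 1} with ω_i > 0 (i.e., z_i - e_i is exponential with rate ω_i). Assume z_1 ≥ z_2 ≥ ... ≥ z_n, set z_{n+1} = -∞, and define h_i = exp(Σ_{j=1}^i ω_j (z_{i+1} - z_i)) for i < n and h_n = 0. Then E[max{e_1,...,e_n}] = z_1 - Σ_{i=1}^n ( (1 - h_i) ∏_{j=1}^{i-1} h_j ) / (Σ_{j=1}^i ω_j ). -/

import Mathlib

open MeasureTheory ProbabilityTheory

private lemma auxExpIio0 : expMeasure 1 (Set.Iio 0) = 0 := by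
  rw [show expMeasure 1 = MeasureTheory.volume.withDensity (gammaPDF 1 1) from rfl,
    withDensity_apply _ measurableSet_Iio]
  exact lintegral_gammaPDF_of_nonpos le_rfl

private lemma auxExpIoi (s : ℝ) :
    expMeasure 1 (Set.Ioi s) = ENNReal.ofReal (Real.exp (-(max s 0))) := by
  haveI : IsProbabilityMeasure (expMeasure 1) := isProbabilityMeasure_expMeasure one_pos
  have hIic : expMeasure 1 (Set.Iic s)
      = ENNReal.ofReal (if 0 ≤ s then 1 - Real.exp (-(1 * s)) else 0) := by
    rw [show expMeasure 1 = MeasureTheory.volume.withDensity (exponentialPDF 1) from rfl,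
      withDensity_apply _ measurableSet_Iic]
    exact lintegral_exponentialPDF_eq_antiDeriv one_pos s
  have hcompl := measure_compl (μ := expMeasure 1) (measurableSet_Iic (a := s)) (measure_ne_top _ _)
  rw [Set.compl_Iic] at hcompl
  rw [hcompl, hIic, measure_univ]
  rcases le_or_gt 0 s with hs | hs
  · rw [if_pos hs, max_eq_left hs, ← ENNReal.ofReal_one,
      ← ENNReal.ofReal_sub _ (by
        have : Real.exp (-(1 * s)) ≤ 1 := Real.exp_le_one_iff.mpr (by nlinarith)
        linarith)]
    congr 1
    rw [one_mul]
    ring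
  · rw [if_neg (not_le.mpr hs), max_eq_right hs.le]
    simp

private lemma auxIntegrableSup {Ω : Type*} [MeasurableSpace Ω] {μ : Measure Ω} {s : Finset ℕ}
    (hs : s.Nonempty) {f : ℕ → Ω → ℝ} (hf : ∀ i, Integrable (f i) μ) :
    Integrable (fun ω => s.sup' hs fun i => f i ω) μ := by
  induction hs using Finset.Nonempty.cons_induction with
  | singleton a => simpa only [Finset.sup'_singleton] using hf a
  | cons a s h hs ih =>
    have : (fun ω => (Finset.cons a s h).sup' (Finset.cons_nonempty h) fun i => f i ω)
        = fun ω => f a ω ⊔ s.sup' hs fun i => f i ω := by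
      funext ω; exact Finset.sup'_cons hs _
    rw [this]
    exact (hf a).sup ih

/-- Expected maximum of independent reversed exponentials `e i = z i - X i / ω i`
with `X i ~ Exp(1)`, `z` nonincreasing. -/
theorem stmt0 {Ω : Type*} [MeasureSpace Ω] [IsProbabilityMeasure (ℙ : Measure Ω)]
    (n : ℕ) (hn : 0 < n) (z : ℕ → ℝ) (w : ℕ → ℝ) (hw : ∀ i, 0 < w i)
    (X : ℕ → Ω → ℝ)
    (hindep : iIndepFun X ℙ)
    (hX : ∀ i, Measure.map (X i) ℙ = expMeasure 1)
    (hz : ∀ i j, i ≤ j → z j ≤ z i)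
    (e : ℕ → Ω → ℝ) (he : ∀ i ω, e i ω = z i - X i ω / w i)
    (h : ℕ → ℝ)
    (hh : ∀ i, i + 1 < n →
      h i = Real.exp (∑ j ∈ Finset.range (i + 1), w j * (z (i + 1) - z i)))
    (hlast : h (n - 1) = 0) :
    ∫ ω, (Finset.range n).sup' (Finset.nonempty_range_iff.mpr hn.ne') (fun i => e i ω) ∂ℙ
      = z 0 - ∑ i ∈ Finset.range n,
          ((1 - h i) * ∏ j ∈ Finset.range i, h j) / (∑ j ∈ Finset.range (i + 1), w j) := by
  obtain ⟨m, rfl⟩ : ∃ m, n = m + 1 := ⟨n - 1, (Nat.succ_pred_eq_of_pos hn).symm⟩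
  have hm0 : h m = 0 := by simpa using hlast
  haveI : IsProbabilityMeasure (expMeasure 1) := isProbabilityMeasure_expMeasure one_pos
  set a : ℕ → ℝ := fun i => z 0 - z i with ha
  set W : ℕ → ℝ := fun i => ∑ j ∈ Finset.range (i + 1), w j with hWdef
  set c : ℕ → ℝ := fun i => ∑ j ∈ Finset.range (i + 1), w j * a j with hcdef
  have ha0 : a 0 = 0 := by simp [ha]
  have hamono : ∀ {i j}, i ≤ j → a i ≤ a j := fun {i j} hij => by
    simp only [ha]; linarith [hz i j hij]
  have hann : ∀ i, 0 ≤ a i := fun i => ha0 ▸ hamono (Nat.zero_le i)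
  have hWpos : ∀ i, 0 < W i :=
    fun i => Finset.sum_pos (fun j _ => hw j) Finset.nonempty_range_add_one
  have hXm : ∀ i, AEMeasurable (X i) ℙ := by
    intro i
    by_contra hc
    have h0 := Measure.map_of_not_aemeasurable hc
    rw [hX i] at h0
    exact IsProbabilityMeasure.ne_zero (expMeasure 1) h0
  have hXtail : ∀ i s, ℙ (X i ⁻¹' Set.Ioi s) = ENNReal.ofReal (Real.exp (-(max s 0))) := by
    intro i s
    rw [← Measure.map_apply_of_aemeasurable (hXm i) measurableSet_Ioi, hX i, auxExpIoi]
  have hXnn : ∀ i, ∀ᵐ ω ∂ℙ, 0 ≤ X i ω := by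
    intro i
    rw [ae_iff]
    have h0 : ℙ (X i ⁻¹' Set.Iio 0) = 0 := by
      rw [← Measure.map_apply_of_aemeasurable (hXm i) measurableSet_Iio, hX i, auxExpIio0]
    simpa [Set.preimage, not_le] using h0
  have hXint : ∀ i, Integrable (X i) ℙ := by
    intro i
    refine ⟨(hXm i).aestronglyMeasurable, ?_⟩
    have heq : ∫⁻ ω, ‖X i ω‖ₑ ∂ℙ = ∫⁻ ω, ENNReal.ofReal (X i ω) ∂ℙ := by
      refine lintegral_congr_ae ?_
      filter_upwards [hXnn i] with ω hω
      rw [Real.enorm_eq_ofReal hω]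
    have hlt : ∫⁻ ω, ENNReal.ofReal (X i ω) ∂ℙ < ⊤ := by
      rw [lintegral_eq_lintegral_meas_lt ℙ (hXnn i) (hXm i)]
      have hbd : ∫⁻ t in Set.Ioi (0:ℝ), ℙ {ω | t < X i ω}
          = ∫⁻ t in Set.Ioi (0:ℝ), ENNReal.ofReal (Real.exp (-1 * t)) := by
        refine setLIntegral_congr_fun measurableSet_Ioi (fun t ht => ?_)
        have hset : {ω | t < X i ω} = X i ⁻¹' Set.Ioi t := rfl
        rw [hset, hXtail i t, max_eq_left (le_of_lt ht)]
        norm_num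
      rw [hbd]
      exact (exp_neg_integrableOn_Ioi 0 one_pos).lintegral_lt_top
    rw [HasFiniteIntegral, heq]
    exact hlt
  have heint : ∀ i, Integrable (e i) ℙ := by
    intro i
    have hei : e i = fun ω => z i - X i ω / w i := funext (he i)
    rw [hei]
    exact (integrable_const (z i)).sub ((hXint i).div_const (w i))
  set M : Ω → ℝ := fun ω =>
    (Finset.range (m + 1)).sup' (Finset.nonempty_range_iff.mpr hn.ne') (fun i => e i ω)
    with hMdef
  have hMint : Integrable M ℙ := auxIntegrableSup _ heint
  have hMle : ∀ᵐ ω ∂ℙ, M ω ≤ z 0 := by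
    filter_upwards [ae_all_iff.mpr hXnn] with ω hω
    simp only [hMdef]
    refine Finset.sup'_le _ _ fun i _ => ?_
    rw [he i ω]
    have h1 : 0 ≤ X i ω / w i := div_nonneg (hω i) (hw i).le
    have h2 := hz 0 i (Nat.zero_le i)
    linarith
  have hfnn : 0 ≤ᵐ[ℙ] fun ω => z 0 - M ω := by
    filter_upwards [hMle] with ω hω
    simp [hω]
  have hfint : Integrable (fun ω => z 0 - M ω) ℙ := (integrable_const _).sub hMint
  set G : ℝ → ℝ :=
    fun t => ∏ i ∈ Finset.range (m + 1), Real.exp (-(max (w i * (t - a i)) 0)) with hGdef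
  have hGnn : ∀ t, 0 ≤ G t := fun t => Finset.prod_nonneg fun i _ => (Real.exp_pos _).le
  have hmeasset : ∀ t : ℝ, ℙ {ω | t < z 0 - M ω} = ENNReal.ofReal (G t) := by
    intro t
    have hseteq : {ω | t < z 0 - M ω}
        = ⋂ i ∈ Finset.range (m + 1), X i ⁻¹' Set.Ioi (w i * (t - a i)) := by
      ext ω
      simp only [Set.mem_setOf_eq, Set.mem_iInter, Set.mem_preimage, Set.mem_Ioi]
      have hMlt : (t < z 0 - M ω) ↔ M ω < z 0 - t := by constructor <;> intro <;> linarith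
      rw [hMlt]
      simp only [hMdef]
      rw [Finset.sup'_lt_iff]
      refine forall₂_congr fun i hi => ?_
      rw [he i ω]
      simp only [ha]
      rw [mul_comm, ← lt_div_iff₀ (hw i)]
      constructor <;> intro <;> linarith
    rw [hseteq, iIndepFun_iff_measure_inter_preimage_eq_mul.mp hindep (Finset.range (m + 1))
      (sets := fun i => Set.Ioi (w i * (t - a i))) (fun i _ => measurableSet_Ioi)]
    rw [Finset.prod_congr rfl (fun i _ => hXtail i (w i * (t - a i)))]
    simp only [hGdef]
    rw [ENNReal.ofReal_prod_of_nonneg (fun i _ => (Real.exp_pos _).le)]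
  have hint1 : ∫ ω, M ω ∂ℙ = z 0 - ∫ t in Set.Ioi (0:ℝ), G t := by
    have h1 : ∫ ω, (z 0 - M ω) ∂ℙ = z 0 - ∫ ω, M ω ∂ℙ := by
      rw [integral_sub (integrable_const _) hMint, integral_const]
      simp
    have h2 := hfint.integral_eq_integral_meas_lt hfnn
    have h3 : ∫ t in Set.Ioi (0:ℝ), (ℙ {ω | t < z 0 - M ω}).toReal
        = ∫ t in Set.Ioi (0:ℝ), G t := by
      refine setIntegral_congr_fun measurableSet_Ioi fun t _ => ?_
      rw [hmeasset t, ENNReal.toReal_ofReal (hGnn t)]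
    have h4 : ∫ ω, (z 0 - M ω) ∂ℙ = ∫ t in Set.Ioi (0:ℝ), G t := h2.trans h3
    linarith
  have hG_on : ∀ i, i ≤ m → ∀ t : ℝ, a i < t → (i < m → t ≤ a (i + 1)) →
      G t = Real.exp (c i - W i * t) := by
    intro i him t hti htj
    simp only [hGdef]
    rw [← Finset.prod_range_mul_prod_Ico _ (Nat.succ_le_succ him)]
    have h2 : ∏ j ∈ Finset.Ico (i + 1) (m + 1), Real.exp (-(max (w j * (t - a j)) 0)) = 1 := by
      refine Finset.prod_eq_one fun j hj => ?_
      obtain ⟨hj1, hj2⟩ := Finset.mem_Ico.mp hj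
      have him' : i < m := lt_of_lt_of_le (Nat.lt_of_succ_le hj1) (Nat.lt_succ_iff.mp hj2)
      have htj' : t ≤ a j := le_trans (htj him') (hamono hj1)
      have hnp : w j * (t - a j) ≤ 0 := by nlinarith [hw j]
      rw [max_eq_right hnp]
      simp
    have h1 : ∏ j ∈ Finset.range (i + 1), Real.exp (-(max (w j * (t - a j)) 0))
        = Real.exp (c i - W i * t) := by
      have hterm : ∀ j ∈ Finset.range (i + 1), Real.exp (-(max (w j * (t - a j)) 0))
          = Real.exp (w j * a j - w j * t) := by
        intro j hj
        have hji : j ≤ i := Nat.lt_succ_iff.mp (Finset.mem_range.mp hj)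
        have hjt : a j < t := lt_of_le_of_lt (hamono hji) hti
        have hpos : 0 ≤ w j * (t - a j) := by nlinarith [hw j]
        rw [max_eq_left hpos]
        congr 1
        ring
      rw [Finset.prod_congr rfl hterm, ← Real.exp_sum]
      congr 1
      simp only [hcdef, hWdef]
      rw [Finset.sum_sub_distrib, ← Finset.sum_mul]
    rw [h1, h2, mul_one]
  have hP : ∀ i, i ≤ m → ∏ j ∈ Finset.range i, h j = Real.exp (c i - W i * a i) := by
    intro i
    induction i with
    | zero =>
      intro _
      rw [Finset.prod_range_zero]
      simp [hcdef, hWdef]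
    | succ i ih =>
      intro hi
      rw [Finset.prod_range_succ, ih (Nat.le_of_succ_le hi),
        hh i (Nat.succ_lt_succ (Nat.lt_of_succ_le hi)), ← Finset.sum_mul, ← Real.exp_add]
      congr 1
      simp only [hcdef, hWdef, ha, Finset.sum_range_succ]
      ring
  have hGcont : Continuous G := by
    simp only [hGdef]
    refine continuous_finset_prod _ fun i _ => ?_
    exact (((continuous_const.mul (continuous_id.sub continuous_const)).max
      continuous_const).neg).rexp
  have hGint0 : IntegrableOn G (Set.Ioi (0:ℝ)) := by
    refine Integrable.mono (exp_neg_integrableOn_Ioi 0 (hw 0))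
      hGcont.aestronglyMeasurable.restrict ?_
    rw [ae_restrict_iff' measurableSet_Ioi]
    refine ae_of_all _ fun t ht => ?_
    rw [Real.norm_eq_abs, Real.norm_eq_abs, abs_of_nonneg (hGnn t),
      abs_of_nonneg (Real.exp_pos _).le]
    simp only [hGdef]
    rw [Finset.prod_range_succ']
    have hb1 : ∏ j ∈ Finset.range m, Real.exp (-(max (w (j + 1) * (t - a (j + 1))) 0)) ≤ 1 :=
      Finset.prod_le_one (fun j _ => (Real.exp_pos _).le)
        (fun j _ => Real.exp_le_one_iff.mpr (neg_nonpos.mpr (le_max_right _ _)))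
    have hb0 : Real.exp (-(max (w 0 * (t - a 0)) 0)) = Real.exp (-w 0 * t) := by
      have hmax : max (w 0 * (t - a 0)) 0 = w 0 * t := by
        rw [ha0, sub_zero]
        exact max_eq_left (by nlinarith [hw 0, Set.mem_Ioi.mp ht])
      rw [hmax]
      ring_nf
    calc (∏ j ∈ Finset.range m, Real.exp (-(max (w (j + 1) * (t - a (j + 1))) 0)))
          * Real.exp (-(max (w 0 * (t - a 0)) 0))
        ≤ 1 * Real.exp (-(max (w 0 * (t - a 0)) 0)) :=
          mul_le_mul_of_nonneg_right hb1 (Real.exp_pos _).le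
      _ = Real.exp (-w 0 * t) := by rw [one_mul, hb0]
  have hGintIoi : ∀ k, IntegrableOn G (Set.Ioi (a k)) :=
    fun k => hGint0.mono_set (Set.Ioi_subset_Ioi (hann k))
  have hGintIoc : ∀ k, IntegrableOn G (Set.Ioc (a k) (a (k + 1))) :=
    fun k => (hGintIoi k).mono_set Set.Ioc_subset_Ioi_self
  have hsplit : ∀ k, k ≤ m →
      ∫ t in Set.Ioi (0:ℝ), G t
        = (∑ i ∈ Finset.range k, ∫ t in Set.Ioc (a i) (a (i + 1)), G t)
          + ∫ t in Set.Ioi (a k), G t := by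
    intro k hk
    induction k with
    | zero => simp [ha0]
    | succ k ih =>
      rw [ih (Nat.le_of_succ_le hk), Finset.sum_range_succ]
      have hsp : ∫ t in Set.Ioi (a k), G t
          = (∫ t in Set.Ioc (a k) (a (k + 1)), G t) + ∫ t in Set.Ioi (a (k + 1)), G t := by
        rw [← setIntegral_union (Set.Ioc_disjoint_Ioi le_rfl) measurableSet_Ioi
          (hGintIoc k) (hGintIoi (k + 1)), Set.Ioc_union_Ioi_eq_Ioi (hamono (Nat.le_succ k))]
      rw [hsp]
      ring
  have hderiv : ∀ i (t : ℝ), HasDerivAt (fun s => -Real.exp (c i - W i * s) / W i)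
      (Real.exp (c i - W i * t)) t := by
    intro i t
    have h1 : HasDerivAt (fun s : ℝ => c i - W i * s) (-(W i)) t := by
      simpa using ((hasDerivAt_id t).const_mul (W i)).const_sub (c i)
    have h3 := (h1.exp.neg).div_const (W i)
    refine h3.congr_deriv ?_
    rw [div_eq_iff (hWpos i).ne']
    ring
  have hterm : ∀ i, i < m → ∫ t in Set.Ioc (a i) (a (i + 1)), G t
      = ((1 - h i) * ∏ j ∈ Finset.range i, h j) / W i := by
    intro i him
    have hle : a i ≤ a (i + 1) := hamono (Nat.le_succ i)
    rw [setIntegral_congr_fun measurableSet_Ioc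
      (fun t ht => hG_on i (le_of_lt him) t ht.1 (fun _ => ht.2))]
    rw [← intervalIntegral.integral_of_le hle]
    rw [intervalIntegral.integral_eq_sub_of_hasDerivAt (fun t _ => hderiv i t)
      (((continuous_const.sub (continuous_const.mul continuous_id)).rexp).intervalIntegrable _ _)]
    have hhi : h i = Real.exp (W i * (a i - a (i + 1))) := by
      rw [hh i (Nat.succ_lt_succ him), ← Finset.sum_mul]
      congr 1
      simp only [hWdef, ha]
      ring
    have hexp : Real.exp (c i - W i * a (i + 1)) = Real.exp (c i - W i * a i) * h i := by
      rw [hhi, ← Real.exp_add]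
      congr 1
      ring
    rw [hexp, hP i (le_of_lt him)]
    have hW0 : W i ≠ 0 := (hWpos i).ne'
    field_simp
    ring
  have hlastterm : ∫ t in Set.Ioi (a m), G t
      = ((1 - h m) * ∏ j ∈ Finset.range m, h j) / W m := by
    have hcongr : ∫ t in Set.Ioi (a m), G t = ∫ t in Set.Ioi (a m), Real.exp (c m - W m * t) :=
      setIntegral_congr_fun measurableSet_Ioi
        (fun t ht => hG_on m le_rfl t ht (fun hc => absurd hc (lt_irrefl m)))
    have hint : IntegrableOn (fun t => Real.exp (c m - W m * t)) (Set.Ioi (a m)) := by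
      have hrw : ∀ t : ℝ, Real.exp (c m - W m * t) = Real.exp (c m) * Real.exp (-(W m) * t) := by
        intro t
        rw [← Real.exp_add]
        congr 1
        ring
      simp_rw [hrw]
      exact (exp_neg_integrableOn_Ioi _ (hWpos m)).const_mul _
    have htend : Filter.Tendsto (fun s => -Real.exp (c m - W m * s) / W m)
        Filter.atTop (nhds 0) := by
      have h2 : Filter.Tendsto (fun s : ℝ => W m * s) Filter.atTop Filter.atTop :=
        Filter.Tendsto.const_mul_atTop (hWpos m) Filter.tendsto_id
      have h1 : Filter.Tendsto (fun s : ℝ => c m - W m * s) Filter.atTop Filter.atBot := by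
        simpa [sub_eq_add_neg] using
          Filter.tendsto_atBot_add_const_left Filter.atTop (c m)
            (Filter.tendsto_neg_atBot_iff.mpr h2)
      have h4 := Real.tendsto_exp_atBot.comp h1
      have h5 := (h4.neg).div_const (W m)
      simpa using h5
    rw [hcongr, MeasureTheory.integral_Ioi_of_hasDerivAt_of_tendsto
      ((((continuous_const.sub (continuous_const.mul continuous_id)).rexp.neg).div_const
        (W m)).continuousWithinAt)
      (fun t _ => hderiv m t) hint htend]
    rw [hm0, hP m le_rfl]
    have hW0 : W m ≠ 0 := (hWpos m).ne'
    field_simp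
    simp [hcdef, hWdef]
  rw [hint1, hsplit m le_rfl, Finset.sum_range_succ]
  congr 1
  rw [Finset.sum_congr rfl (fun i hi => hterm i (Finset.mem_range.mp hi)), hlastterm]
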